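/- arXiv:1808.01636 — 4 statements merged into one kernel-verified Lean document; each statement's English description precedes it below -/
import Mathlib

section
/- The forcing notion Q(H̄) is (<κ)-complete: every increasing sequence ⟨p_α : α < δ⟩ of conditions in Q(H̄) of limit length δ < κ has an upper bound in Q(H̄). -/
open Ordinal Set Cardinal

noncomputable section

/-- A "sequence" coded as (length, values padded by 0 off the domain). -/
abbrev OSeq : Type 1 := Ordinal × (Ordinal → Ordinal)

/-- The restriction `f↾α` of `f` to ordinals below `α`. -/
def restr (f : Ordinal → Ordinal) (α : Ordinal) : OSeq :=
  (α, fun β => if β < α then f β else 0)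

/-- `s` is a sequence of length `< κ` with values `< κ`. -/
def IsSeq (κ : Cardinal) (s : OSeq) : Prop :=
  s.1 < κ.ord ∧ (∀ β < s.1, s.2 β < κ.ord) ∧ ∀ β, ¬ β < s.1 → s.2 β = 0

/-- A condition of the forcing Q(H̄): a tuple (γ, e, v, u, h) where γ < κ,
e ⊆ γ+1 is closed with max(e) = γ, v ∈ [F]^{<κ} with distinct members
separated at γ, and h is a partial function with domain
u = {f↾α : α ∈ e, f ∈ v} and values in κ^{<κ}. -/
structure Cond (κ : Cardinal) (F : Set (Ordinal → Ordinal)) where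
  γ : Ordinal
  e : Set Ordinal
  v : Set (Ordinal → Ordinal)
  h : OSeq → Option OSeq
  γ_lt : γ < κ.ord
  e_sub : e ⊆ Set.Iic γ
  e_closed : ∀ S ⊆ e, S.Nonempty → sSup S ∈ e
  γ_mem : γ ∈ e
  v_sub : v ⊆ F
  v_small : #v < Cardinal.lift.{1,0} κ
  sep : ∀ f ∈ v, ∀ g ∈ v, f ≠ g → restr f γ ≠ restr g γ
  h_dom : ∀ s, (h s ≠ none) ↔ ∃ f ∈ v, ∃ α ∈ e, s = restr f α
  h_seq : ∀ s t, h s = some t → IsSeq κ t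

/-- The set u of a condition: all restrictions f↾α, f ∈ v, α ∈ e. -/
def Cond.u {κ : Cardinal} {F : Set (Ordinal → Ordinal)} (p : Cond κ F) : Set OSeq :=
  {s | ∃ f ∈ p.v, ∃ α ∈ p.e, s = restr f α}

/-- The order of Q(H̄): p ≤ q iff γᵖ ≤ γ^q, eᵖ = e^q ∩ (γᵖ+1), vᵖ ⊆ v^q,
hᵖ ⊆ h^q, and h^q(f↾α) = H_f(α) for f ∈ vᵖ and α ∈ e^q \ eᵖ. -/
def Qle {κ : Cardinal} {F : Set (Ordinal → Ordinal)}
    (H : (Ordinal → Ordinal) → Ordinal → OSeq) (p q : Cond κ F) : Prop :=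
  p.γ ≤ q.γ ∧ p.e = q.e ∩ Set.Iic p.γ ∧ p.v ⊆ q.v ∧
  (∀ s t, p.h s = some t → q.h s = some t) ∧
  ∀ f ∈ p.v, ∀ α ∈ q.e, α ∉ p.e → q.h (restr f α) = some (H f α)

/-- Compatibility: a common upper bound exists. -/
def Compat {κ : Cardinal} {F : Set (Ordinal → Ordinal)}
    (H : (Ordinal → Ordinal) → Ordinal → OSeq) (p q : Cond κ F) : Prop :=
  ∃ r, Qle H p r ∧ Qle H q r

lemma restr_ne_of_le {f g : Ordinal → Ordinal} {γ γ' : Ordinal} (h : γ ≤ γ')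
    (hne : restr f γ ≠ restr g γ) : restr f γ' ≠ restr g γ' := by
  intro heq
  apply hne
  have h2 : ∀ β, β < γ' → f β = g β := by
    intro β hβ
    have := congrFun (congrArg Prod.snd heq) β
    simpa [restr, hβ] using this
  unfold restr
  refine Prod.ext rfl (funext fun β => ?_)
  by_cases hb : β < γ
  · simp [hb, h2 β (hb.trans_le h)]
  · simp [hb]

lemma lift_isRegular {κ : Cardinal} (hreg : κ.IsRegular) :
    (Cardinal.lift.{1,0} κ).IsRegular := by
  constructor
  · exact Cardinal.aleph0_le_lift.2 hreg.1
  · rw [← Cardinal.lift_ord, ← Ordinal.lift_cof]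
    exact Cardinal.lift_le.2 hreg.2

/-- Q(H̄) is (<κ)-complete: any increasing sequence of limit length δ < κ
has an upper bound. -/
theorem stmt4 (κ : Cardinal) (hreg : κ.IsRegular) (hunc : ℵ₀ < κ)
    (F : Set (Ordinal → Ordinal))
    (hFsep : ∀ f ∈ F, ∀ g ∈ F, f ≠ g → ∃ β < κ.ord, f β ≠ g β)
    (H : (Ordinal → Ordinal) → Ordinal → OSeq)
    (hH : ∀ f ∈ F, ∀ α < κ.ord, IsSeq κ (H f α))
    (δ : Ordinal) (hδ : δ < κ.ord) (hlim : Order.IsSuccLimit δ)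
    (p : Ordinal → Cond κ F)
    (hinc : ∀ α β, α ≤ β → β < δ → Qle H (p α) (p β)) :
    ∃ q : Cond κ F, ∀ α < δ, Qle H (p α) q := by
  classical
  -- index type
  have hδ0 : δ ≠ 0 := hlim.pos.ne'
  have hne : Nonempty δ.ToType := Ordinal.toType_nonempty_iff_ne_zero.2 hδ0
  set idx : δ.ToType → Ordinal := fun i => ((Ordinal.ToType.mk (o := δ)).symm i).1 with hidx
  have hidxlt : ∀ i, idx i < δ := fun i => ((Ordinal.ToType.mk (o := δ)).symm i).2
  have hidxeq : ∀ α (hα : α < δ), idx ((Ordinal.ToType.mk (o := δ)) ⟨α, hα⟩) = α := by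
    intro α hα
    simp [hidx]
  -- basic monotonicity facts
  have heinc : ∀ {α β}, α ≤ β → β < δ → (p α).e ⊆ (p β).e := by
    intro α β hab hb
    rw [(hinc α β hab hb).2.1]
    exact Set.inter_subset_left
  have hvinc : ∀ {α β}, α ≤ β → β < δ → (p α).v ⊆ (p β).v := fun hab hb =>
    (hinc _ _ hab hb).2.2.1
  -- Γ
  set Γ : Ordinal := ⨆ i, (p (idx i)).γ with hΓ
  have hΓlt : Γ < κ.ord := by
    refine Cardinal.iSup_lt_ord_of_isRegular hreg ?_ fun i => (p (idx i)).γ_lt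
    rw [Cardinal.mk_toType]
    exact Cardinal.lt_ord.1 hδ
  have hγle : ∀ α, α < δ → (p α).γ ≤ Γ := by
    intro α hα
    have := le_ciSup (f := fun i => (p (idx i)).γ) (Ordinal.bddAbove_range _)
      ((Ordinal.ToType.mk (o := δ)) ⟨α, hα⟩)
    rwa [hidxeq α hα] at this
  -- E, V
  set E : Set Ordinal := {x | x = Γ ∨ ∃ α, α < δ ∧ x ∈ (p α).e} with hE
  set V : Set (Ordinal → Ordinal) := {f | ∃ α, α < δ ∧ f ∈ (p α).v} with hV
  have hVF : V ⊆ F := by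
    rintro f ⟨α, hα, hf⟩
    exact (p α).v_sub hf
  have hEsub : E ⊆ Set.Iic Γ := by
    rintro x (rfl | ⟨α, hα, hx⟩)
    · exact Set.self_mem_Iic
    · exact le_trans ((p α).e_sub hx) (hγle α hα)
  -- separation on V at Γ
  have hVsep : ∀ f ∈ V, ∀ g ∈ V, f ≠ g → restr f Γ ≠ restr g Γ := by
    rintro f ⟨α, hα, hf⟩ g ⟨β, hβ, hg⟩ hfg
    have hμ : max α β < δ := max_lt hα hβ
    have hf' : f ∈ (p (max α β)).v := hvinc (le_max_left _ _) hμ hf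
    have hg' : g ∈ (p (max α β)).v := hvinc (le_max_right _ _) hμ hg
    exact restr_ne_of_le (hγle _ hμ) ((p (max α β)).sep f hf' g hg' hfg)
  -- h'
  set h' : OSeq → Option OSeq := fun s =>
    if hc : ∃ α, α < δ ∧ (p α).h s ≠ none then (p hc.choose).h s
    else if hd : ∃ f, f ∈ V ∧ s = restr f Γ then some (H hd.choose Γ) else none
    with hh'
  -- extension lemma
  have L1 : ∀ s t α, α < δ → (p α).h s = some t → h' s = some t := by
    intro s t α hα hst
    have hc : ∃ β, β < δ ∧ (p β).h s ≠ none := ⟨α, hα, by simp [hst]⟩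
    rw [hh']
    simp only
    rw [dif_pos hc]
    obtain ⟨hβδ, hβ⟩ := hc.choose_spec
    set β := hc.choose with hβdef
    obtain ⟨t', ht'⟩ : ∃ t', (p β).h s = some t' := by
      cases hb : (p β).h s with
      | none => exact absurd hb hβ
      | some t' => exact ⟨t', rfl⟩
    have hμ : max α β < δ := max_lt hα hβδ
    have h1 : (p (max α β)).h s = some t :=
      (hinc α (max α β) (le_max_left _ _) hμ).2.2.2.1 s t hst
    have h2 : (p (max α β)).h s = some t' :=
      (hinc β (max α β) (le_max_right _ _) hμ).2.2.2.1 s t' ht'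
    rw [h1] at h2
    rw [ht']
    exact h2.symm
  -- the condition q
  refine ⟨⟨Γ, E, V, h', hΓlt, hEsub, ?_, Or.inl rfl, hVF, ?_, hVsep, ?_, ?_⟩, ?_⟩
  · -- e_closed
    intro S hS hSne
    have hbdd : BddAbove S := ⟨Γ, fun x hx => hEsub (hS hx)⟩
    have hσle : sSup S ≤ Γ := csSup_le hSne fun x hx => hEsub (hS hx)
    rcases eq_or_lt_of_le hσle with heq | hlt
    · exact Or.inl heq
    · obtain ⟨i, hi⟩ := exists_lt_of_lt_ciSup' (hΓ ▸ hlt)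
      set α := idx i with hα
      have hαδ : α < δ := hidxlt i
      have hsub : S ⊆ (p α).e := by
        intro x hx
        have hxσ : x ≤ sSup S := le_csSup hbdd hx
        rcases hS hx with rfl | ⟨β, hβ, hxe⟩
        · exact absurd (hxσ.trans_lt hlt) (lt_irrefl _)
        · have hμ : max α β < δ := max_lt hαδ hβ
          have hx' : x ∈ (p (max α β)).e := heinc (le_max_right _ _) hμ hxe
          have : x ∈ (p (max α β)).e ∩ Set.Iic (p α).γ :=
            ⟨hx', le_of_lt (lt_of_le_of_lt hxσ hi)⟩
          rw [← (hinc α (max α β) (le_max_left _ _) hμ).2.1] at this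
          exact this
      exact Or.inr ⟨α, hαδ, (p α).e_closed S hsub hSne⟩
  · -- v_small
    have hsub : V ⊆ ⋃ i, (p (idx i)).v := by
      rintro f ⟨α, hα, hf⟩
      exact Set.mem_iUnion.2 ⟨(Ordinal.ToType.mk (o := δ)) ⟨α, hα⟩, (hidxeq α hα).symm ▸ hf⟩
    refine lt_of_le_of_lt (Cardinal.mk_le_mk_of_subset hsub) ?_
    have h1 := Cardinal.mk_iUnion_le_lift (fun i => (p (idx i)).v)
    simp only [Cardinal.lift_uzero] at h1
    refine lt_of_le_of_lt h1 (Cardinal.mul_lt_of_lt (lift_isRegular hreg).1 ?_ ?_)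
    · rw [Cardinal.mk_toType]
      exact Cardinal.lift_lt.2 (Cardinal.lt_ord.1 hδ)
    · refine Cardinal.iSup_lt_lift_of_isRegular (lift_isRegular hreg) ?_ ?_
      · rw [Cardinal.mk_toType]
        exact Cardinal.lift_lt.2 (Cardinal.lt_ord.1 hδ)
      · intro i
        exact (p (idx i)).v_small
  · -- h_dom
    intro s
    rw [hh']
    simp only
    constructor
    · intro hne'
      by_cases hc : ∃ α, α < δ ∧ (p α).h s ≠ none
      · obtain ⟨hβδ, hβ⟩ := hc.choose_spec
        obtain ⟨f, hf, β, hβe, hs⟩ := ((p hc.choose).h_dom s).1 hβ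
        exact ⟨f, ⟨hc.choose, hβδ, hf⟩, β, Or.inr ⟨hc.choose, hβδ, hβe⟩, hs⟩
      · rw [dif_neg hc] at hne'
        by_cases hd : ∃ f, f ∈ V ∧ s = restr f Γ
        · obtain ⟨hfV, hs⟩ := hd.choose_spec
          exact ⟨hd.choose, hfV, Γ, Or.inl rfl, hs⟩
        · rw [dif_neg hd] at hne'
          exact absurd rfl hne'
    · rintro ⟨f, hfV, β, hβE, rfl⟩
      by_cases hc : ∃ α, α < δ ∧ (p α).h (restr f β) ≠ none
      · rw [dif_pos hc]
        exact hc.choose_spec.2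
      · rw [dif_neg hc]
        have hβΓ : β = Γ := by
          rcases hβE with h | ⟨α', hα', hβe⟩
          · exact h
          · exfalso
            obtain ⟨α, hα, hf⟩ := hfV
            have hμ : max α α' < δ := max_lt hα hα'
            refine hc ⟨max α α', hμ, ?_⟩
            exact ((p (max α α')).h_dom _).2
              ⟨f, hvinc (le_max_left _ _) hμ hf, β, heinc (le_max_right _ _) hμ hβe, rfl⟩
        subst hβΓ
        have hd : ∃ g, g ∈ V ∧ restr f Γ = restr g Γ := ⟨f, hfV, rfl⟩
        rw [dif_pos hd]
        simp
  · -- h_seq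
    intro s t hst
    rw [hh'] at hst
    simp only at hst
    by_cases hc : ∃ α, α < δ ∧ (p α).h s ≠ none
    · rw [dif_pos hc] at hst
      exact (p hc.choose).h_seq s t hst
    · rw [dif_neg hc] at hst
      by_cases hd : ∃ f, f ∈ V ∧ s = restr f Γ
      · rw [dif_pos hd] at hst
        have := hH hd.choose (hVF hd.choose_spec.1) Γ hΓlt
        rwa [← Option.some_inj.1 hst]
      · rw [dif_neg hd] at hst
        exact absurd hst (by simp)
  · -- the order
    intro α hα
    refine ⟨hγle α hα, ?_, fun f hf => ⟨α, hα, hf⟩, fun s t => L1 s t α hα, ?_⟩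
    · -- e equality
      ext x
      constructor
      · intro hx
        exact ⟨Or.inr ⟨α, hα, hx⟩, (p α).e_sub hx⟩
      · rintro ⟨hxE, hxle⟩
        rcases hxE with h | ⟨β, hβ, hxe⟩
        · have hxγ : x = (p α).γ := le_antisymm hxle (h ▸ hγle α hα)
          rw [hxγ]
          exact (p α).γ_mem
        · have hμ : max α β < δ := max_lt hα hβ
          have hx' : x ∈ (p (max α β)).e := heinc (le_max_right _ _) hμ hxe
          have : x ∈ (p (max α β)).e ∩ Set.Iic (p α).γ := ⟨hx', hxle⟩
          rw [← (hinc α (max α β) (le_max_left _ _) hμ).2.1] at this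
          exact this
    · -- new values
      intro f hf β hβE hβnot
      by_cases hβold : ∃ α', α' < δ ∧ β ∈ (p α').e
      · obtain ⟨α', hα', hβe⟩ := hβold
        have hμ : max α α' < δ := max_lt hα hα'
        have h5 := (hinc α (max α α') (le_max_left _ _) hμ).2.2.2.2 f hf β
          (heinc (le_max_right _ _) hμ hβe) hβnot
        exact L1 _ _ _ hμ h5
      · have hβΓ : β = Γ := by
          rcases hβE with h | ⟨α', hα', hβe⟩
          · exact h
          · exact absurd ⟨α', hα', hβe⟩ hβold
        subst hβΓ
        show h' (restr f Γ) = some (H f Γ)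
        simp only [hh']
        have hc : ¬ ∃ α', α' < δ ∧ (p α').h (restr f Γ) ≠ none := by
          rintro ⟨α', hα', hne'⟩
          obtain ⟨g, hg, β', hβ'e, hs⟩ := ((p α').h_dom _).1 hne'
          have : Γ = β' := congrArg Prod.fst hs
          exact hβold ⟨α', hα', this ▸ hβ'e⟩
        rw [dif_neg hc]
        have hd : ∃ g, g ∈ V ∧ restr f Γ = restr g Γ := ⟨f, ⟨α, hα, hf⟩, rfl⟩
        rw [dif_pos hd]
        obtain ⟨hgV, hgs⟩ := hd.choose_spec
        have : hd.choose = f := by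
          by_contra hne'
          exact hVsep hd.choose hgV f ⟨α, hα, hf⟩ hne' hgs.symm
        rw [this]
end
end

section
/- The forcing notion Q(H̄) has the κ⁺-Knaster property: every sequence ⟨p_α : α < κ⁺⟩ of conditions in Q(H̄) has a subsequence of length κ⁺ whose members are pairwise compatible. -/
open Ordinal Set Cardinal

noncomputable section

lemma restr_eq_restr {f g : Ordinal → Ordinal} {δ : Ordinal} :
    restr f δ = restr g δ ↔ ∀ β < δ, f β = g β := by
  constructor
  · intro h β hβ
    have := congrFun (congrArg Prod.snd h) β
    simpa [restr, if_pos hβ] using this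
  · intro h
    refine Prod.ext rfl (funext fun β => ?_)
    by_cases hβ : β < δ <;> simp [restr, hβ, h β]

/-- A small subset of `Iio κ.ord` is bounded strictly below `κ.ord`. -/
lemma exists_bound {κ : Cardinal} (hreg : κ.IsRegular)
    {s : Set Ordinal} (hsub : s ⊆ Set.Iio κ.ord) (hcard : #s < Cardinal.lift.{1,0} κ) :
    ∃ γ' < κ.ord, ∀ β ∈ s, β < γ' := by
  obtain ⟨μ, hμκ, hμ⟩ := Cardinal.lt_lift_iff.1 hcard
  have hequiv : Nonempty (μ.out ≃ ↥s) := by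
    rw [← Cardinal.lift_mk_eq.{0,1,1}]
    rw [Cardinal.mk_out, Cardinal.lift_id]
    exact hμ
  obtain ⟨e⟩ := hequiv
  set f : μ.out → Ordinal := fun i => (e i).1 + 1 with hf
  have hlim : Order.IsSuccLimit κ.ord := Cardinal.isSuccLimit_ord hreg.aleph0_le
  have hsup : iSup f < κ.ord := by
    apply Ordinal.iSup_lt_ord
    · rwa [Cardinal.mk_out, hreg.cof_eq]
    · intro i
      exact hlim.succ_lt (hsub (e i).2)
  refine ⟨iSup f, hsup, fun β hβ => ?_⟩
  have : f (e.symm ⟨β, hβ⟩) ≤ iSup f := le_ciSup (Ordinal.bddAbove_range f) _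
  simp only [hf, Equiv.apply_symm_apply] at this
  exact lt_of_lt_of_le (lt_add_one β) this

/-- The set of all `<κ`-sequences. -/
def SeqSet (κ : Cardinal) : Set OSeq := {s | IsSeq κ s}

lemma mk_Iio_ord {κ : Cardinal} : #(Set.Iio κ.ord) = Cardinal.lift.{1,0} κ := by
  rw [Ordinal.mk_Iio_ordinal, Cardinal.card_ord]

lemma mk_seqSet_le {κ : Cardinal} (hreg : κ.IsRegular) (hpow : κ ^< κ = κ) :
    #(SeqSet κ) ≤ Cardinal.lift.{1,0} κ := by
  have hκ : Cardinal.lift.{1,0} κ ≠ 0 := by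
    simp [Cardinal.lift_eq_zero]
    exact hreg.pos.ne'
  -- SeqSet = ⋃ δ ∈ Iio κ.ord, slices
  have hcover : SeqSet κ ⊆ ⋃ δ ∈ Set.Iio κ.ord, {s : OSeq | IsSeq κ s ∧ s.1 = δ} := by
    intro s hs
    exact Set.mem_biUnion hs.1 ⟨hs, rfl⟩
  have hslice : ∀ δ ∈ Set.Iio κ.ord,
      #{s : OSeq | IsSeq κ s ∧ s.1 = δ} ≤ Cardinal.lift.{1,0} κ := by
    intro δ hδ
    have hinj : Function.Injective
        (fun s : {s : OSeq // IsSeq κ s ∧ s.1 = δ} =>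
          (fun β : ↥(Set.Iio δ) => (⟨s.1.2 β.1, by
            apply s.2.1.2.1 β.1
            rw [s.2.2]; exact β.2⟩ : ↥(Set.Iio κ.ord)))) := by
      intro s t hst
      apply Subtype.ext
      refine Prod.ext (s.2.2.trans t.2.2.symm) (funext fun β => ?_)
      by_cases hβ : β < δ
      · have := congrFun hst ⟨β, hβ⟩
        exact congrArg Subtype.val this
      · rw [s.2.1.2.2 β (by rw [s.2.2]; exact hβ), t.2.1.2.2 β (by rw [t.2.2]; exact hβ)]
    calc #{s : OSeq | IsSeq κ s ∧ s.1 = δ} ≤ #(↥(Set.Iio δ) → ↥(Set.Iio κ.ord)) :=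
          Cardinal.mk_le_of_injective hinj
      _ = #(↥(Set.Iio κ.ord)) ^ #(↥(Set.Iio δ)) := (Cardinal.power_def _ _).symm
      _ = (Cardinal.lift.{1,0} κ) ^ (Cardinal.lift.{1,0} δ.card) := by
          rw [mk_Iio_ord, Ordinal.mk_Iio_ordinal]
      _ = Cardinal.lift.{1,0} (κ ^ δ.card) := by rw [Cardinal.lift_power]
      _ ≤ Cardinal.lift.{1,0} (κ ^< κ) := by
          apply Cardinal.lift_le.2
          exact Cardinal.le_powerlt κ (Cardinal.lt_ord.1 hδ)
      _ = Cardinal.lift.{1,0} κ := by rw [hpow]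
  calc #(SeqSet κ) ≤ #(⋃ δ ∈ Set.Iio κ.ord, {s : OSeq | IsSeq κ s ∧ s.1 = δ}) :=
        Cardinal.mk_le_mk_of_subset hcover
    _ ≤ #(Set.Iio κ.ord) * ⨆ δ : ↥(Set.Iio κ.ord), #{s : OSeq | IsSeq κ s ∧ s.1 = δ.1} := by
        apply Cardinal.mk_biUnion_le
    _ ≤ Cardinal.lift.{1,0} κ * Cardinal.lift.{1,0} κ := by
        exact mul_le_mul' (le_of_eq mk_Iio_ord) (ciSup_le' fun δ => hslice δ.1 δ.2)
    _ = Cardinal.lift.{1,0} κ := by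
        rw [Cardinal.mul_eq_self]
        rw [Cardinal.aleph0_le_lift]
        exact hreg.aleph0_le

lemma mk_small_sets {κ : Cardinal} (hreg : κ.IsRegular) (hpow : κ ^< κ = κ)
    {X : Type 1} (hX : #X ≤ Cardinal.lift.{1,0} κ) :
    #{s : Set X // #s < Cardinal.lift.{1,0} κ} ≤ Cardinal.lift.{1,0} κ := by
  have haleph : (ℵ₀ : Cardinal.{1}) ≤ Cardinal.lift.{1,0} κ := by
    rw [Cardinal.aleph0_le_lift]; exact hreg.aleph0_le
  -- each bounded-set space is small
  have hfiber : ∀ μ : Cardinal.{0}, μ < κ →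
      #{t : Set X // #t ≤ Cardinal.lift.{1,0} μ} ≤ Cardinal.lift.{1,0} κ := by
    intro μ hμ
    calc #{t : Set X // #t ≤ Cardinal.lift.{1,0} μ}
        ≤ max #X ℵ₀ ^ Cardinal.lift.{1,0} μ := Cardinal.mk_bounded_set_le X _
      _ ≤ (Cardinal.lift.{1,0} κ) ^ (Cardinal.lift.{1,0} μ) :=
          Cardinal.power_le_power_right (max_le hX haleph)
      _ = Cardinal.lift.{1,0} (κ ^ μ) := by rw [Cardinal.lift_power]
      _ ≤ Cardinal.lift.{1,0} (κ ^< κ) := Cardinal.lift_le.2 (Cardinal.le_powerlt κ hμ)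
      _ = Cardinal.lift.{1,0} κ := by rw [hpow]
  -- the cardinals below κ form a set of size ≤ κ
  have hIio : #(Set.Iio κ : Set Cardinal.{0}) ≤ Cardinal.lift.{1,0} κ := by
    have hinj : Function.Injective (fun c : ↥(Set.Iio κ) =>
        (⟨c.1.ord, Cardinal.ord_lt_ord.2 c.2⟩ : ↥(Set.Iio κ.ord))) := by
      intro c d hcd
      apply Subtype.ext
      have := congrArg Subtype.val hcd
      simpa using Cardinal.ord_injective this
    exact (Cardinal.mk_le_of_injective hinj).trans (le_of_eq mk_Iio_ord)
  -- injection into a sigma type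
  set Φ : {s : Set X // #s < Cardinal.lift.{1,0} κ} →
      Σ μ : ↥(Set.Iio κ : Set Cardinal.{0}), {t : Set X // #t ≤ Cardinal.lift.{1,0} μ.1} :=
    fun s => ⟨⟨(Cardinal.lt_lift_iff.1 s.2).choose, (Cardinal.lt_lift_iff.1 s.2).choose_spec.1⟩,
      ⟨s.1, le_of_eq (Cardinal.lt_lift_iff.1 s.2).choose_spec.2.symm⟩⟩ with hΦ
  have hΦinj : Function.Injective Φ := by
    intro s t hst
    apply Subtype.ext
    exact congrArg
      (fun x : (Σ μ : ↥(Set.Iio κ : Set Cardinal.{0}),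
        {t : Set X // #t ≤ Cardinal.lift.{1,0} μ.1}) => x.2.1) hst
  calc #{s : Set X // #s < Cardinal.lift.{1,0} κ}
      ≤ #(Σ μ : ↥(Set.Iio κ : Set Cardinal.{0}), {t : Set X // #t ≤ Cardinal.lift.{1,0} μ.1}) :=
        Cardinal.mk_le_of_injective hΦinj
    _ = Cardinal.sum (fun μ : ↥(Set.Iio κ : Set Cardinal.{0}) =>
        #{t : Set X // #t ≤ Cardinal.lift.{1,0} μ.1}) := Cardinal.mk_sigma _
    _ ≤ Cardinal.sum (fun _ : ↥(Set.Iio κ : Set Cardinal.{0}) => Cardinal.lift.{1,0} κ) :=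
        Cardinal.sum_le_sum _ _ fun μ => hfiber μ.1 μ.2
    _ = #(Set.Iio κ : Set Cardinal.{0}) * Cardinal.lift.{1,0} κ := Cardinal.sum_const' _ _
    _ ≤ Cardinal.lift.{1,0} κ * Cardinal.lift.{1,0} κ := mul_le_mul' hIio le_rfl
    _ = Cardinal.lift.{1,0} κ := Cardinal.mul_eq_self haleph

lemma pigeonhole {κ : Cardinal} (hreg : κ.IsRegular)
    {S T : Type 1} (hS : #S = Cardinal.lift.{1,0} (Order.succ κ))
    (hT : #T ≤ Cardinal.lift.{1,0} κ) (c : S → T) :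
    ∃ b : T, #{a : S | c a = b} = Cardinal.lift.{1,0} (Order.succ κ) := by
  by_contra hcon
  push_neg at hcon
  have hfib : ∀ b : T, #{a : S | c a = b} ≤ Cardinal.lift.{1,0} κ := by
    intro b
    have hle : #{a : S | c a = b} ≤ Cardinal.lift.{1,0} (Order.succ κ) := by
      rw [← hS]; exact Cardinal.mk_set_le _
    rcases lt_or_eq_of_le hle with h | h
    · rw [Cardinal.lift_succ] at h
      exact Order.lt_succ_iff.1 h
    · exact absurd h (hcon b)
  have : #S ≤ Cardinal.lift.{1,0} κ := by
    calc #S = #(Σ b : T, {a : S // c a = b}) := (Cardinal.mk_congr (Equiv.sigmaFiberEquiv c)).symm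
      _ = Cardinal.sum (fun b : T => #{a : S // c a = b}) := Cardinal.mk_sigma _
      _ ≤ Cardinal.sum (fun _ : T => Cardinal.lift.{1,0} κ) :=
          Cardinal.sum_le_sum _ _ fun b => hfib b
      _ = #T * Cardinal.lift.{1,0} κ := Cardinal.sum_const' _ _
      _ ≤ Cardinal.lift.{1,0} κ * Cardinal.lift.{1,0} κ := mul_le_mul' hT le_rfl
      _ = Cardinal.lift.{1,0} κ := Cardinal.mul_eq_self
          (by rw [Cardinal.aleph0_le_lift]; exact hreg.aleph0_le)
  rw [hS] at this
  exact absurd (Cardinal.lift_le.1 this) (not_le.2 (Order.lt_succ κ))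

lemma compat_of_eq {κ : Cardinal} {F : Set (Ordinal → Ordinal)}
    (hreg : κ.IsRegular)
    (hFsep : ∀ f ∈ F, ∀ g ∈ F, f ≠ g → ∃ β < κ.ord, f β ≠ g β)
    (H : (Ordinal → Ordinal) → Ordinal → OSeq)
    (hH : ∀ f ∈ F, ∀ α < κ.ord, IsSeq κ (H f α))
    (p q : Cond κ F) (hγ : p.γ = q.γ) (he : p.e = q.e) (hh : p.h = q.h) :
    Compat H p q := by
  classical
  have haleph : (ℵ₀ : Cardinal.{1}) ≤ Cardinal.lift.{1,0} κ := by
    rw [Cardinal.aleph0_le_lift]; exact hreg.aleph0_le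
  have hlim : Order.IsSuccLimit κ.ord := Cardinal.isSuccLimit_ord hreg.aleph0_le
  set v' : Set (Ordinal → Ordinal) := p.v ∪ q.v with hv'
  have hvF : v' ⊆ F := Set.union_subset p.v_sub q.v_sub
  have hvsmall : #v' < Cardinal.lift.{1,0} κ :=
    (Cardinal.mk_union_le _ _).trans_lt
      (Cardinal.add_lt_of_lt haleph p.v_small q.v_small)
  -- choose difference points
  set d : (Ordinal → Ordinal) × (Ordinal → Ordinal) → Ordinal := fun x =>
    if h : x.1 ∈ F ∧ x.2 ∈ F ∧ x.1 ≠ x.2 then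
      (hFsep x.1 h.1 x.2 h.2.1 h.2.2).choose else 0 with hd
  have hdlt : ∀ x, d x < κ.ord := by
    intro x
    by_cases h : x.1 ∈ F ∧ x.2 ∈ F ∧ x.1 ≠ x.2
    · rw [hd]; simp only [dif_pos h]
      exact (hFsep x.1 h.1 x.2 h.2.1 h.2.2).choose_spec.1
    · rw [hd]; simp only [dif_neg h]
      exact hlim.pos
  set B : Set Ordinal := d '' (v' ×ˢ v') ∪ {p.γ} with hB
  have hBsub : B ⊆ Set.Iio κ.ord := by
    rintro x (⟨y, _, rfl⟩ | hx)
    · exact hdlt y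
    · rw [Set.mem_singleton_iff] at hx; subst hx; exact p.γ_lt
  have hBcard : #B < Cardinal.lift.{1,0} κ := by
    refine (Cardinal.mk_union_le _ _).trans_lt (Cardinal.add_lt_of_lt haleph ?_ ?_)
    · refine Cardinal.mk_image_le.trans_lt ?_
      have : #(↥(v' ×ˢ v')) = #v' * #v' := by
        rw [Cardinal.mk_congr (Equiv.Set.prod v' v'), Cardinal.mk_prod]
        simp
      rw [this]
      exact Cardinal.mul_lt_of_lt haleph hvsmall hvsmall
    · rw [Cardinal.mk_singleton]
      exact Cardinal.one_lt_aleph0.trans_le haleph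
  obtain ⟨γ', hγ'κ, hbound⟩ := exists_bound hreg hBsub hBcard
  have hγγ' : p.γ < γ' := hbound p.γ (Or.inr rfl)
  have hsep' : ∀ f ∈ v', ∀ g ∈ v', f ≠ g → ∃ β < γ', f β ≠ g β := by
    intro f hf g hg hne
    have hcond : f ∈ F ∧ g ∈ F ∧ f ≠ g := ⟨hvF hf, hvF hg, hne⟩
    have hmem : d (f, g) ∈ B := Or.inl (Set.mem_image_of_mem d (Set.mk_mem_prod hf hg))
    refine ⟨d (f, g), hbound _ hmem, ?_⟩
    have hdeq : d (f, g) = (hFsep f hcond.1 g hcond.2.1 hcond.2.2).choose := dif_pos hcond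
    rw [hdeq]
    exact (hFsep f hcond.1 g hcond.2.1 hcond.2.2).choose_spec.2
  have hsepγ' : ∀ f ∈ v', ∀ g ∈ v', restr f γ' = restr g γ' → f = g := by
    intro f hf g hg heq
    by_contra hne
    obtain ⟨β, hβ, hfg⟩ := hsep' f hf g hg hne
    exact hfg (restr_eq_restr.1 heq β hβ)
  have hplen : ∀ s, p.h s ≠ none → s.1 ≤ p.γ := by
    intro s hs
    obtain ⟨f, _, α, hα, rfl⟩ := (p.h_dom s).1 hs
    exact p.e_sub hα
  have hpnone : ∀ f, p.h (restr f γ') = none := by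
    intro f
    by_contra hne
    exact absurd (hplen _ hne) (not_le.2 hγγ')
  set e' : Set Ordinal := p.e ∪ {γ'} with he'
  set h' : OSeq → Option OSeq := fun s => (p.h s).elim
    (if hs : ∃ f, f ∈ v' ∧ s = restr f γ' then some (H hs.choose γ') else none) some
    with hh'
  have hsome : ∀ s t, p.h s = some t → h' s = some t := by
    intro s t hst; simp [hh', hst]
  have hnonecase : ∀ s, p.h s = none → h' s =
      (if hs : ∃ f, f ∈ v' ∧ s = restr f γ' then some (H hs.choose γ') else none) := by
    intro s hst; simp [hh', hst]
  have he'sub : e' ⊆ Set.Iic γ' := by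
    rintro x (hx | hx)
    · exact (p.e_sub hx).trans (le_of_lt hγγ')
    · rw [Set.mem_singleton_iff] at hx; subst hx; exact Set.self_mem_Iic
  set r : Cond κ F :=
    { γ := γ'
      e := e'
      v := v'
      h := h'
      γ_lt := hγ'κ
      e_sub := he'sub
      e_closed := by
        intro S hS hne
        by_cases hγ'S : γ' ∈ S
        · have hub : ∀ x ∈ S, x ≤ γ' := fun x hx => he'sub (hS hx)
          have : sSup S = γ' := le_antisymm (csSup_le hne hub) (le_csSup ⟨γ', hub⟩ hγ'S)
          rw [this]; exact Or.inr rfl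
        · have hSe : S ⊆ p.e := by
            intro x hx
            rcases hS hx with h | h
            · exact h
            · rw [Set.mem_singleton_iff] at h; subst h; exact absurd hx hγ'S
          exact Or.inl (p.e_closed S hSe hne)
      γ_mem := Or.inr rfl
      v_sub := hvF
      v_small := hvsmall
      sep := fun f hf g hg hne heq => hne (hsepγ' f hf g hg heq)
      h_dom := by
        intro s
        constructor
        · intro hs
          cases hps : p.h s with
          | some t =>
            obtain ⟨f, hf, α, hα, hsr⟩ := (p.h_dom s).1 (by rw [hps]; simp)
            exact ⟨f, Or.inl hf, α, Or.inl hα, hsr⟩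
          | none =>
            rw [hnonecase s hps] at hs
            by_cases hex : ∃ f, f ∈ v' ∧ s = restr f γ'
            · obtain ⟨f, hf, hsr⟩ := hex
              exact ⟨f, hf, γ', Or.inr rfl, hsr⟩
            · rw [dif_neg hex] at hs; exact absurd rfl hs
        · rintro ⟨f, hf, α, hα, rfl⟩
          rcases hα with hα | hα
          · have hpne : p.h (restr f α) ≠ none := by
              rcases hf with hf | hf
              · exact (p.h_dom _).2 ⟨f, hf, α, hα, rfl⟩
              · rw [hh]
                refine (q.h_dom _).2 ⟨f, hf, α, ?_, rfl⟩
                rw [← he]; exact hα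
            obtain ⟨t, ht⟩ := Option.ne_none_iff_exists'.1 hpne
            rw [hsome _ t ht]; simp
          · rw [Set.mem_singleton_iff] at hα
            rw [hα]
            cases hps : p.h (restr f γ') with
            | some t => rw [hsome _ t hps]; simp
            | none =>
              rw [hnonecase _ hps, dif_pos ⟨f, hf, rfl⟩]
              simp
      h_seq := by
        intro s t hst
        cases hps : p.h s with
        | some t' =>
          rw [hsome s t' hps] at hst
          injection hst with h2
          subst h2
          exact p.h_seq s t' hps
        | none =>
          rw [hnonecase s hps] at hst
          by_cases hex : ∃ f, f ∈ v' ∧ s = restr f γ'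
          · rw [dif_pos hex] at hst
            injection hst with h2
            subst h2
            exact hH _ (hvF hex.choose_spec.1) γ' hγ'κ
          · rw [dif_neg hex] at hst; exact absurd hst (by simp) }
    with hr
  have hlast : ∀ f ∈ v', h' (restr f γ') = some (H f γ') := by
    intro f hf
    have hex : ∃ g, g ∈ v' ∧ restr f γ' = restr g γ' := ⟨f, hf, rfl⟩
    rw [hnonecase _ (hpnone f), dif_pos hex]
    have : hex.choose = f := hsepγ' hex.choose hex.choose_spec.1 f hf hex.choose_spec.2.symm
    rw [this]
  refine ⟨r, ⟨le_of_lt hγγ', ?_, Set.subset_union_left, fun s t hst => hsome s t hst, ?_⟩,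
    ⟨hγ ▸ le_of_lt hγγ', ?_, Set.subset_union_right, ?_, ?_⟩⟩
  · -- p.e = e' ∩ Iic p.γ
    ext x
    constructor
    · intro hx; exact ⟨Or.inl hx, p.e_sub hx⟩
    · rintro ⟨hx1, hx2⟩
      rcases hx1 with h | h
      · exact h
      · rw [Set.mem_singleton_iff] at h; subst h
        exact absurd hx2 (not_le.2 hγγ')
  · -- new-point clause for p
    intro f hf α hα hnα
    have hαγ' : α = γ' := by
      rcases hα with h | h
      · exact absurd h hnα
      · rwa [Set.mem_singleton_iff] at h
    rw [hαγ']
    exact hlast f (Or.inl hf)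
  · -- q.e = e' ∩ Iic q.γ
    rw [← he, ← hγ]
    ext x
    constructor
    · intro hx; exact ⟨Or.inl hx, p.e_sub hx⟩
    · rintro ⟨hx1, hx2⟩
      rcases hx1 with h | h
      · exact h
      · rw [Set.mem_singleton_iff] at h; subst h
        exact absurd hx2 (not_le.2 hγγ')
  · -- q.h ⊆ h'
    intro s t hst
    rw [← hh] at hst
    exact hsome s t hst
  · -- new-point clause for q
    intro f hf α hα hnα
    have hαγ' : α = γ' := by
      rcases hα with h | h
      · rw [he] at h; exact absurd h hnα
      · rwa [Set.mem_singleton_iff] at h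
    rw [hαγ']
    exact hlast f (Or.inr hf)

lemma mk_e_lt {κ : Cardinal} {F : Set (Ordinal → Ordinal)} (hreg : κ.IsRegular)
    (q : Cond κ F) : #q.e < Cardinal.lift.{1,0} κ := by
  have h1 : #q.e ≤ #(Set.Iic q.γ) := Cardinal.mk_le_mk_of_subset q.e_sub
  have h2 : (Set.Iic q.γ) = Set.Iio (Order.succ q.γ) := (Order.Iio_succ_of_not_isMax (not_isMax q.γ)).symm
  have h3 : #(Set.Iic q.γ) = Cardinal.lift.{1,0} ((Order.succ q.γ).card) := by
    rw [h2, Ordinal.mk_Iio_ordinal]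
  refine h1.trans_lt ?_
  rw [h3]
  apply Cardinal.lift_lt.2
  rw [← Ordinal.add_one_eq_succ, Ordinal.card_add, Ordinal.card_one]
  have hc : q.γ.card < κ := Cardinal.lt_ord.1 q.γ_lt
  by_cases hinf : ℵ₀ ≤ q.γ.card
  · rwa [Cardinal.add_one_eq hinf]
  · exact (Cardinal.add_lt_aleph0 (not_le.1 hinf) Cardinal.one_lt_aleph0).trans_le
      hreg.aleph0_le

lemma mk_u_lt {κ : Cardinal} {F : Set (Ordinal → Ordinal)} (hreg : κ.IsRegular)
    (q : Cond κ F) : #{s : OSeq | ∃ f ∈ q.v, ∃ α ∈ q.e, s = restr f α}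
      < Cardinal.lift.{1,0} κ := by
  have haleph : (ℵ₀ : Cardinal.{1}) ≤ Cardinal.lift.{1,0} κ := by
    rw [Cardinal.aleph0_le_lift]; exact hreg.aleph0_le
  have himg : {s : OSeq | ∃ f ∈ q.v, ∃ α ∈ q.e, s = restr f α}
      = (fun x : ((Ordinal → Ordinal) × Ordinal) => restr x.1 x.2) '' (q.v ×ˢ q.e) := by
    ext s
    constructor
    · rintro ⟨f, hf, α, hα, rfl⟩
      exact ⟨(f, α), Set.mk_mem_prod hf hα, rfl⟩
    · rintro ⟨⟨f, α⟩, ⟨hf, hα⟩, rfl⟩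
      exact ⟨f, hf, α, hα, rfl⟩
  rw [himg]
  refine Cardinal.mk_image_le.trans_lt ?_
  have : #(↥(q.v ×ˢ q.e)) = #q.v * #q.e := by
    rw [Cardinal.mk_congr (Equiv.Set.prod q.v q.e), Cardinal.mk_prod]
    simp
  rw [this]
  exact Cardinal.mul_lt_of_lt haleph q.v_small (mk_e_lt hreg q)

/-- The graph of h, coded inside `SeqSet κ × SeqSet κ`. -/
def preG {κ : Cardinal} {F : Set (Ordinal → Ordinal)} (q : Cond κ F) :
    Set (↥(SeqSet κ) × ↥(SeqSet κ)) :=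
  (fun x : ↥(SeqSet κ) × ↥(SeqSet κ) => ((x.1.1, x.2.1) : OSeq × OSeq)) ⁻¹'
    {y : OSeq × OSeq | q.h y.1 = some y.2}

lemma mk_preG_lt {κ : Cardinal} {F : Set (Ordinal → Ordinal)} (hreg : κ.IsRegular)
    (q : Cond κ F) : #(preG q) < Cardinal.lift.{1,0} κ := by
  have hinj : Function.Injective
      (fun x : ↥(SeqSet κ) × ↥(SeqSet κ) => ((x.1.1, x.2.1) : OSeq × OSeq)) := by
    intro x y hxy
    have h1 := congrArg Prod.fst hxy
    have h2 := congrArg Prod.snd hxy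
    exact Prod.ext (Subtype.ext h1) (Subtype.ext h2)
  refine (Cardinal.mk_preimage_of_injective _ _ hinj).trans_lt ?_
  -- graph injects into the domain set u
  have hinj2 : Function.Injective
      (fun y : ↥{y : OSeq × OSeq | q.h y.1 = some y.2} =>
        (⟨y.1.1, (q.h_dom y.1.1).1 (by rw [y.2]; simp)⟩ :
          ↥{s : OSeq | ∃ f ∈ q.v, ∃ α ∈ q.e, s = restr f α})) := by
    intro y z hyz
    have h1 : y.1.1 = z.1.1 := congrArg Subtype.val hyz
    apply Subtype.ext
    refine Prod.ext h1 ?_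
    have hy := y.2
    have hz := z.2
    simp only [Set.mem_setOf_eq] at hy hz
    rw [h1] at hy
    rw [hy] at hz
    exact Option.some.inj hz
  exact (Cardinal.mk_le_of_injective hinj2).trans_lt (mk_u_lt hreg q)

lemma h_eq_of_preG_eq {κ : Cardinal} {F : Set (Ordinal → Ordinal)}
    (hFrange : ∀ f ∈ F, ∀ β < κ.ord, f β < κ.ord)
    (p q : Cond κ F) (hpre : preG p = preG q) : p.h = q.h := by
  have key : ∀ p' q' : Cond κ F, preG p' = preG q' → ∀ s t, p'.h s = some t → q'.h s = some t := by
    intro p' q' hpre' s t hst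
    have hs : IsSeq κ s := by
      obtain ⟨f, hf, α, hα, rfl⟩ := (p'.h_dom s).1 (by rw [hst]; simp)
      have hακ : α < κ.ord := lt_of_le_of_lt (p'.e_sub hα) p'.γ_lt
      refine ⟨hακ, fun β hβ => ?_, fun β hβ => ?_⟩
      · simp only [restr] at hβ ⊢
        rw [if_pos hβ]
        exact hFrange f (p'.v_sub hf) β (hβ.trans hακ)
      · simp only [restr] at hβ ⊢
        rw [if_neg hβ]
    have ht : IsSeq κ t := p'.h_seq s t hst
    have hmem : ((⟨s, hs⟩, ⟨t, ht⟩) : ↥(SeqSet κ) × ↥(SeqSet κ)) ∈ preG p' := hst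
    rw [hpre'] at hmem
    exact hmem
  funext s
  cases hps : p.h s with
  | some t => exact (key p q hpre s t hps).symm
  | none =>
    cases hqs : q.h s with
    | some t => rw [← hps]; exact (key q p hpre.symm s t hqs)
    | none => rfl

/-- Q(H̄) has the κ⁺-Knaster property: any κ⁺-sequence of conditions has a
κ⁺-sized subfamily of pairwise compatible conditions. -/
theorem stmt6 (κ : Cardinal) (hreg : κ.IsRegular) (hunc : ℵ₀ < κ)
    (hpow : κ ^< κ = κ)
    (F : Set (Ordinal → Ordinal))
    (hF : #F = Cardinal.lift.{1,0} (Order.succ κ))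
    (hFrange : ∀ f ∈ F, ∀ β < κ.ord, f β < κ.ord)
    (hFsep : ∀ f ∈ F, ∀ g ∈ F, f ≠ g → ∃ β < κ.ord, f β ≠ g β)
    (H : (Ordinal → Ordinal) → Ordinal → OSeq)
    (hH : ∀ f ∈ F, ∀ α < κ.ord, IsSeq κ (H f α))
    (p : Ordinal → Cond κ F) :
    ∃ A : Set Ordinal, A ⊆ Set.Iio (Order.succ κ).ord ∧
      #A = Cardinal.lift.{1,0} (Order.succ κ) ∧
      ∀ α ∈ A, ∀ β ∈ A, Compat H (p α) (p β) := by
  classical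
  have haleph : (ℵ₀ : Cardinal.{1}) ≤ Cardinal.lift.{1,0} κ := by
    rw [Cardinal.aleph0_le_lift]; exact hreg.aleph0_le
  -- the coding target
  set X₁ : Type 1 := ↥(Set.Iio κ.ord) with hX₁
  set X₂ : Type 1 := ↥(SeqSet κ) with hX₂
  set T : Type 1 := X₁ × {e : Set X₁ // #e < Cardinal.lift.{1,0} κ} ×
    {G : Set (X₂ × X₂) // #G < Cardinal.lift.{1,0} κ} with hT
  have hmkX₁ : #X₁ = Cardinal.lift.{1,0} κ := mk_Iio_ord
  have hmkX₂ : #(X₂ × X₂) ≤ Cardinal.lift.{1,0} κ := by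
    rw [Cardinal.mk_prod]
    simp only [Cardinal.lift_id]
    calc #X₂ * #X₂ ≤ Cardinal.lift.{1,0} κ * Cardinal.lift.{1,0} κ :=
          mul_le_mul' (mk_seqSet_le hreg hpow) (mk_seqSet_le hreg hpow)
      _ = Cardinal.lift.{1,0} κ := Cardinal.mul_eq_self haleph
  have hmkT : #T ≤ Cardinal.lift.{1,0} κ := by
    rw [hT, Cardinal.mk_prod, Cardinal.mk_prod]
    simp only [Cardinal.lift_id]
    calc #X₁ * (#{e : Set X₁ // #e < Cardinal.lift.{1,0} κ} *
        #{G : Set (X₂ × X₂) // #G < Cardinal.lift.{1,0} κ})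
        ≤ Cardinal.lift.{1,0} κ * (Cardinal.lift.{1,0} κ * Cardinal.lift.{1,0} κ) := by
          refine mul_le_mul' (le_of_eq hmkX₁) (mul_le_mul' ?_ ?_)
          · exact mk_small_sets hreg hpow (le_of_eq hmkX₁)
          · exact mk_small_sets hreg hpow hmkX₂
      _ = Cardinal.lift.{1,0} κ := by
          rw [Cardinal.mul_eq_self haleph, Cardinal.mul_eq_self haleph]
  -- the coding function
  have hecard : ∀ q : Cond κ F, #(Subtype.val ⁻¹' q.e : Set X₁) < Cardinal.lift.{1,0} κ :=
    fun q => (Cardinal.mk_preimage_of_injective _ _ Subtype.val_injective).trans_lt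
      (mk_e_lt hreg q)
  set code : Cond κ F → T := fun q =>
    ⟨⟨q.γ, q.γ_lt⟩, ⟨Subtype.val ⁻¹' q.e, hecard q⟩, ⟨preG q, mk_preG_lt hreg q⟩⟩ with hcode
  -- code equality gives the data needed for compatibility
  have hextract : ∀ q q' : Cond κ F, code q = code q' →
      q.γ = q'.γ ∧ q.e = q'.e ∧ q.h = q'.h := by
    intro q q' hqq
    have h1 : q.γ = q'.γ := congrArg (fun x : T => x.1.1) hqq
    have h2 : (Subtype.val ⁻¹' q.e : Set X₁) = Subtype.val ⁻¹' q'.e :=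
      congrArg (fun x : T => x.2.1.1) hqq
    have h3 : preG q = preG q' := congrArg (fun x : T => x.2.2.1) hqq
    refine ⟨h1, ?_, h_eq_of_preG_eq hFrange q q' h3⟩
    have hsub : ∀ q'' : Cond κ F, q''.e ⊆ Set.range (Subtype.val : X₁ → Ordinal) := by
      intro q'' x hx
      rw [Subtype.range_coe]
      exact lt_of_le_of_lt (q''.e_sub hx) q''.γ_lt
    have := congrArg (Set.image (Subtype.val : X₁ → Ordinal)) h2
    rwa [Set.image_preimage_eq_of_subset (hsub q),
      Set.image_preimage_eq_of_subset (hsub q')] at this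
  -- pigeonhole
  set S : Type 1 := ↥(Set.Iio (Order.succ κ).ord) with hS
  have hmkS : #S = Cardinal.lift.{1,0} (Order.succ κ) := by
    rw [hS, Ordinal.mk_Iio_ordinal, Cardinal.card_ord]
  obtain ⟨b₀, hb₀⟩ := pigeonhole hreg hmkS hmkT (fun a : S => code (p a.1))
  refine ⟨Subtype.val '' {a : S | code (p a.1) = b₀}, ?_, ?_, ?_⟩
  · rintro x ⟨a, _, rfl⟩
    exact a.2
  · rw [Cardinal.mk_image_eq Subtype.val_injective]
    exact hb₀
  · rintro α ⟨a, ha, rfl⟩ β ⟨b, hb, rfl⟩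
    have hab : code (p a.1) = code (p b.1) := by
      rw [ha, hb]
    obtain ⟨h1, h2, h3⟩ := hextract _ _ hab
    exact compat_of_eq hreg hFsep H hH _ _ h1 h2 h3
end
end

section
/- If p_α and p_β are conditions in Q(H̄) with γ^{p_α} = γ^{p_β}, e^{p_α} = e^{p_β}, u^{p_α} = u^{p_β}, and h^{p_α} = h^{p_β}, then p_α and p_β are compatible in Q(H̄). -/
open Ordinal Set Cardinal

noncomputable section

/-- Conditions with the same γ, e, u and h are compatible. -/
theorem stmt7 (κ : Cardinal) (hreg : κ.IsRegular) (hunc : ℵ₀ < κ)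
    (F : Set (Ordinal → Ordinal))
    (hFsep : ∀ f ∈ F, ∀ g ∈ F, f ≠ g → ∃ β < κ.ord, f β ≠ g β)
    (H : (Ordinal → Ordinal) → Ordinal → OSeq)
    (hH : ∀ f ∈ F, ∀ α < κ.ord, IsSeq κ (H f α))
    (p q : Cond κ F)
    (h1 : p.γ = q.γ) (h2 : p.e = q.e) (h3 : p.u = q.u) (h4 : p.h = q.h) :
    Compat H p q := by
  classical
  set V : Set (Ordinal → Ordinal) := p.v ∪ q.v with hV
  have hVF : V ⊆ F := Set.union_subset p.v_sub q.v_sub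
  have hVsmall : #V < Cardinal.lift.{1,0} κ :=
    (Cardinal.mk_union_le _ _).trans_lt
      (Cardinal.add_lt_of_lt (Cardinal.aleph0_le_lift.mpr hreg.aleph0_le)
        p.v_small q.v_small)
  -- find a Type-0 index for V
  obtain ⟨μ, hμκ, hμV⟩ := Cardinal.lt_lift_iff.mp hVsmall
  have hEq : #(ULift.{1} μ.out) = #V := by
    rw [Cardinal.mk_uLift, Cardinal.mk_out]; exact hμV
  obtain ⟨E⟩ := Cardinal.eq.mp hEq
  -- separation points
  have key : ∀ f ∈ V, ∀ g ∈ V, f ≠ g → ∃ β, β < κ.ord ∧ f β ≠ g β := by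
    intro f hf g hg hne
    obtain ⟨β, hβ1, hβ2⟩ := hFsep f (hVF hf) g (hVF hg) hne
    exact ⟨β, hβ1, hβ2⟩
  set D : μ.out × μ.out → Ordinal := fun x =>
    if hne : (E ⟨x.1⟩ : Ordinal → Ordinal) ≠ (E ⟨x.2⟩ : Ordinal → Ordinal) then
      Classical.choose (key _ (E ⟨x.1⟩).2 _ (E ⟨x.2⟩).2 hne) else 0 with hD
  have hκord : Order.IsSuccLimit (Cardinal.ord κ) := Cardinal.isSuccLimit_ord hreg.aleph0_le
  have hDlt : ∀ x, D x < κ.ord := by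
    intro x
    rw [hD]
    dsimp only
    split
    · exact (Classical.choose_spec (key _ (E ⟨x.1⟩).2 _ (E ⟨x.2⟩).2 (by assumption))).1
    · exact hκord.pos
  have hidx : #(μ.out × μ.out) < κ := by
    have : #(μ.out × μ.out) = μ * μ := by
      simp [Cardinal.mk_prod, Cardinal.mk_out]
    rw [this]
    exact Cardinal.mul_lt_of_lt hreg.aleph0_le hμκ hμκ
  have hsup : iSup D < κ.ord := Cardinal.iSup_lt_ord_of_isRegular hreg hidx hDlt
  set γ0 : Ordinal := max (iSup D) p.γ with hγ0
  set γ' : Ordinal := γ0 + 1 with hγ'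
  have hγ'lt : γ' < κ.ord := by
    have h0 : γ0 < κ.ord := max_lt hsup p.γ_lt
    have := hκord.succ_lt h0
    rwa [Order.succ_eq_add_one] at this
  have hpγ : p.γ < γ' := lt_of_le_of_lt (le_max_right _ _) (lt_add_one γ0)
  -- every pair in V is separated below γ'
  have hsep' : ∀ f ∈ V, ∀ g ∈ V, f ≠ g → ∃ β, β < γ' ∧ f β ≠ g β := by
    intro f hf g hg hne
    obtain ⟨⟨i⟩, hi⟩ := E.surjective ⟨f, hf⟩
    obtain ⟨⟨j⟩, hj⟩ := E.surjective ⟨g, hg⟩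
    have hfi : (E ⟨i⟩ : Ordinal → Ordinal) = f := by rw [hi]
    have hgj : (E ⟨j⟩ : Ordinal → Ordinal) = g := by rw [hj]
    have hne' : (E ⟨i⟩ : Ordinal → Ordinal) ≠ (E ⟨j⟩ : Ordinal → Ordinal) := by
      rw [hfi, hgj]; exact hne
    have hDval : D (i, j) =
        Classical.choose (key _ (E ⟨i⟩).2 _ (E ⟨j⟩).2 hne') := by
      simp only [hD]; rw [dif_pos hne']
    obtain ⟨hlt0, hspec⟩ := Classical.choose_spec (key _ (E ⟨i⟩).2 _ (E ⟨j⟩).2 hne')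
    have hle : D (i, j) < γ' :=
      lt_of_le_of_lt ((Ordinal.le_iSup D _).trans (le_max_left _ _)) (lt_add_one γ0)
    rw [hDval] at hle
    exact ⟨_, hle, by rw [← hfi, ← hgj]; exact hspec⟩
  have hrestr_ne : ∀ f ∈ V, ∀ g ∈ V, f ≠ g → restr f γ' ≠ restr g γ' := by
    intro f hf g hg hne heq
    obtain ⟨β, hβ1, hβ2⟩ := hsep' f hf g hg hne
    have := congrArg (fun s : OSeq => s.2 β) heq
    simp only [restr, if_pos hβ1] at this
    exact hβ2 this
  -- the h of the new condition
  set hr : OSeq → Option OSeq := fun s =>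
    if s.1 = γ' then
      (if hs : ∃ f ∈ V, s = restr f γ' then some (H (Classical.choose hs) γ') else none)
    else p.h s with hhr
  -- facts about restr
  have restr_fst : ∀ (f : Ordinal → Ordinal) (α : Ordinal), (restr f α).1 = α :=
    fun _ _ => rfl
  have e_lt : ∀ α ∈ p.e, α < γ' := fun α hα => lt_of_le_of_lt (p.e_sub hα) hpγ
  -- if s is in p's domain then s.1 ≠ γ'
  have dom_ne : ∀ s, p.h s ≠ none → s.1 ≠ γ' := by
    intro s hs
    obtain ⟨f, _, α, hα, rfl⟩ := (p.h_dom s).mp hs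
    exact ne_of_lt (e_lt α hα)
  -- construct the condition r
  refine ⟨⟨γ', insert γ' p.e, V, hr, hγ'lt, ?_, ?_, Set.mem_insert _ _, hVF, hVsmall,
      ?_, ?_, ?_⟩, ?_, ?_⟩
  · -- e_sub
    intro x hx
    rcases hx with rfl | hx
    · exact Set.self_mem_Iic
    · exact le_of_lt (e_lt x hx)
  · -- e_closed
    intro S hS hSne
    by_cases hγS : γ' ∈ S
    · have h1' : sSup S ≤ γ' := by
        apply csSup_le hSne
        intro x hx
        rcases hS hx with rfl | hx'
        · exact le_refl _
        · exact le_of_lt (e_lt x hx')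
      have h2' : γ' ≤ sSup S := le_csSup ⟨γ', fun x hx => by
        rcases hS hx with rfl | hx'
        · exact le_refl _
        · exact le_of_lt (e_lt x hx')⟩ hγS
      rw [le_antisymm h1' h2']
      exact Set.mem_insert _ _
    · have hS' : S ⊆ p.e := by
        intro x hx
        rcases hS hx with rfl | hx'
        · exact absurd hx hγS
        · exact hx'
      exact Set.mem_insert_of_mem _ (p.e_closed S hS' hSne)
  · -- sep
    intro f hf g hg hne
    exact hrestr_ne f hf g hg hne
  · -- h_dom
    intro s
    simp only [hhr]
    by_cases hs1 : s.1 = γ'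
    · rw [if_pos hs1]
      by_cases hex : ∃ f ∈ V, s = restr f γ'
      · rw [dif_pos hex]
        simp only [ne_eq, reduceCtorEq, not_false_eq_true, true_iff]
        obtain ⟨f, hf, rfl⟩ := hex
        exact ⟨f, hf, γ', Set.mem_insert _ _, rfl⟩
      · rw [dif_neg hex]
        simp only [ne_eq, not_true_eq_false, false_iff]
        rintro ⟨f, hf, α, hα, hsα⟩
        have hαγ : α = γ' := by rw [hsα] at hs1; exact hs1
        exact hex ⟨f, hf, by rwa [hαγ] at hsα⟩
    · rw [if_neg hs1]
      constructor
      · intro hs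
        obtain ⟨f, hf, α, hα, rfl⟩ := (p.h_dom s).mp hs
        exact ⟨f, Or.inl hf, α, Set.mem_insert_of_mem _ hα, rfl⟩
      · rintro ⟨f, hf, α, hα, rfl⟩
        rcases hα with rfl | hα
        · exact absurd rfl hs1
        · -- restr f α is in p.u = q.u hence in dom p.h
          rcases hf with hf | hf
          · exact (p.h_dom _).mpr ⟨f, hf, α, hα, rfl⟩
          · have hu : restr f α ∈ q.u := ⟨f, hf, α, h2 ▸ hα, rfl⟩
            rw [← h3] at hu
            obtain ⟨f', hf', α', hα', heq⟩ := hu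
            exact (p.h_dom _).mpr ⟨f', hf', α', hα', heq⟩
  · -- h_seq
    intro s t hst
    simp only [hhr] at hst
    by_cases hs1 : s.1 = γ'
    · rw [if_pos hs1] at hst
      by_cases hex : ∃ f ∈ V, s = restr f γ'
      · rw [dif_pos hex] at hst
        have hspec := Classical.choose_spec hex
        have := hH _ (hVF hspec.1) γ' hγ'lt
        rw [← Option.some_inj.mp hst]
        exact this
      · rw [dif_neg hex] at hst; exact absurd hst (by simp)
    · rw [if_neg hs1] at hst
      exact p.h_seq s t hst
  · -- Qle H p r
    refine ⟨le_of_lt hpγ, ?_, Set.subset_union_left, ?_, ?_⟩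
    · -- p.e = (insert γ' p.e) ∩ Iic p.γ
      ext x
      constructor
      · intro hx
        exact ⟨Set.mem_insert_of_mem _ hx, p.e_sub hx⟩
      · rintro ⟨hx1, hx2⟩
        rcases hx1 with rfl | hx1
        · exact absurd hx2 (not_le.mpr hpγ)
        · exact hx1
    · -- hr extends p.h
      intro s t hst
      have hne : p.h s ≠ none := by rw [hst]; simp
      have hs1 : s.1 ≠ γ' := dom_ne s hne
      show hr s = some t
      simp only [hhr, if_neg hs1]; exact hst
    · -- new values
      intro f hf α hα hαp
      have hαγ : α = γ' := by
        rcases hα with rfl | hα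
        · rfl
        · exact absurd hα hαp
      subst hαγ
      have hex : ∃ g ∈ V, restr f γ' = restr g γ' := ⟨f, Or.inl hf, rfl⟩
      show hr (restr f γ') = some (H f γ')
      simp only [hhr]
      rw [if_pos (restr_fst f γ'), dif_pos hex]
      have hspec := Classical.choose_spec hex
      have hcf : Classical.choose hex = f := by
        by_contra hne
        exact hrestr_ne _ hspec.1 f (Or.inl hf) hne hspec.2.symm
      rw [hcf]
  · -- Qle H q r
    refine ⟨h1 ▸ le_of_lt hpγ, ?_, Set.subset_union_right, ?_, ?_⟩
    · show q.e = insert γ' p.e ∩ Set.Iic q.γ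
      rw [← h2, ← h1]
      ext x
      constructor
      · intro hx
        exact ⟨Set.mem_insert_of_mem _ hx, p.e_sub hx⟩
      · rintro ⟨hx1, hx2⟩
        rcases hx1 with rfl | hx1
        · exact absurd hx2 (not_le.mpr hpγ)
        · exact hx1
    · intro s t hst
      rw [← h4] at hst
      have hne : p.h s ≠ none := by rw [hst]; simp
      have hs1 : s.1 ≠ γ' := dom_ne s hne
      show hr s = some t
      simp only [hhr, if_neg hs1]; exact hst
    · intro f hf α hα hαq
      have hαγ : α = γ' := by
        rcases hα with rfl | hα
        · rfl
        · exact absurd (h2 ▸ hα) hαq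
      subst hαγ
      have hex : ∃ g ∈ V, restr f γ' = restr g γ' := ⟨f, Or.inr hf, rfl⟩
      show hr (restr f γ') = some (H f γ')
      simp only [hhr]
      rw [if_pos (restr_fst f γ'), dif_pos hex]
      have hspec := Classical.choose_spec hex
      have hcf : Classical.choose hex = f := by
        by_contra hne
        exact hrestr_ne _ hspec.1 f (Or.inr hf) hne hspec.2.symm
      rw [hcf]
end
end

section
/- Suppose κ is regular uncountable, E ⊆ κ is a club, h_n : κ^{<κ} ⇀ κ^{<κ} (n < ω) are partial functions, E^n ⊆ κ are clubs with E ⊆ E^n, and H_f^n(α) = f↾min(⋂_{k<n} E^k \ (α+1)) for each f in a family F ⊆ κ^κ of size κ⁺. Assume that for every f ∈ F and n < ω there is α_n^f ∈ E such that for all α ∈ E^n with α ≥ α_n^f, f↾α ∈ dom(h_n) and h_n(f↾α) = H_f^n(α). Then F has cardinality at most κ, a contradiction; equivalently, no such system (E, ⟨E^n⟩, ⟨h_n⟩) exists when |F| = κ⁺. -/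
open Ordinal Set Cardinal

noncomputable section

/-- `E` is a club (closed unbounded) subset of (the ordinals below) `o`. -/
def IsClubIn (o : Ordinal) (E : Set Ordinal) : Prop :=
  E ⊆ Set.Iio o ∧ (∀ S ⊆ E, S.Nonempty → sSup S < o → sSup S ∈ E) ∧
    ∀ α < o, ∃ β ∈ E, α ≤ β

lemma isSeq_card_le (κ : Cardinal) (hκ : ℵ₀ ≤ κ) (hpow : κ ^< κ = κ) :
    #{s : OSeq // IsSeq κ s} ≤ Cardinal.lift.{1} κ := by
  let emb : {s : OSeq // IsSeq κ s} → Σ α : Iio κ.ord, (Iio (α : Ordinal) → Iio κ.ord) :=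
    fun s => ⟨⟨s.1.1, s.2.1⟩, fun β => ⟨s.1.2 β, s.2.2.1 β β.2⟩⟩
  have hinj : Function.Injective emb := by
    rintro ⟨⟨l₁, v₁⟩, h₁⟩ ⟨⟨l₂, v₂⟩, h₂⟩ hq
    have hl : l₁ = l₂ := congrArg (fun p => (p.1 : Ordinal)) hq
    subst hl
    have hv' : (fun β : Iio (l₁ : Ordinal) => (⟨v₁ β, h₁.2.1 β β.2⟩ : Iio κ.ord))
        = (fun β : Iio (l₁ : Ordinal) => (⟨v₂ β, h₂.2.1 β β.2⟩ : Iio κ.ord)) :=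
      eq_of_heq (Sigma.ext_iff.1 hq).2
    have hfun : v₁ = v₂ := by
      funext β
      by_cases hβ : β < l₁
      · have := congrFun hv' ⟨β, hβ⟩
        exact congrArg Subtype.val this
      · exact (h₁.2.2 β hβ).trans (h₂.2.2 β hβ).symm
    simp [hfun]
  have hterm : ∀ α : Iio κ.ord, #(Iio (α : Ordinal) → Iio κ.ord) ≤ Cardinal.lift.{1} κ := by
    intro α
    have h1 : #(Iio (α : Ordinal) → Iio κ.ord) = Cardinal.lift.{1} κ ^ Cardinal.lift.{1} ((α : Ordinal).card) := by
      rw [← Cardinal.power_def, Ordinal.mk_Iio_ordinal, Ordinal.mk_Iio_ordinal, Cardinal.card_ord]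
    rw [h1, ← Cardinal.lift_power, Cardinal.lift_le]
    calc κ ^ (α : Ordinal).card ≤ κ ^< κ := Cardinal.le_powerlt κ (Cardinal.lt_ord.1 α.2)
      _ = κ := hpow
  calc #{s : OSeq // IsSeq κ s} ≤ #(Σ α : Iio κ.ord, (Iio (α : Ordinal) → Iio κ.ord)) :=
        Cardinal.mk_le_of_injective hinj
    _ = Cardinal.sum (fun α : Iio κ.ord => #(Iio (α : Ordinal) → Iio κ.ord)) := Cardinal.mk_sigma _
    _ ≤ Cardinal.sum (fun _ : Iio κ.ord => Cardinal.lift.{1} κ) := Cardinal.sum_le_sum _ _ hterm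
    _ = #(Iio κ.ord) * Cardinal.lift.{1} κ := Cardinal.sum_const' _ _
    _ = Cardinal.lift.{1} κ * Cardinal.lift.{1} κ := by
        rw [Ordinal.mk_Iio_ordinal, Cardinal.card_ord]
    _ = Cardinal.lift.{1} κ := by rw [← Cardinal.lift_mul, Cardinal.mul_eq_self hκ]

lemma restr_eq_of {f g : Ordinal → Ordinal} {x : Ordinal} (h : ∀ γ < x, f γ = g γ) :
    restr f x = restr g x := by
  unfold restr
  refine Prod.ext rfl ?_
  funext γ
  show (if γ < x then f γ else 0) = (if γ < x then g γ else 0)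
  by_cases hγ : γ < x
  · rw [if_pos hγ, if_pos hγ, h γ hγ]
  · rw [if_neg hγ, if_neg hγ]

lemma eq_of_restr_eq {f g : Ordinal → Ordinal} {x : Ordinal} (h : restr f x = restr g x) :
    ∀ γ < x, f γ = g γ := by
  intro γ hγ
  have := congrFun (congrArg Prod.snd h) γ
  simpa [restr, if_pos hγ] using this


/-- No system (E, ⟨Eⁿ⟩, ⟨hₙ⟩) as in the final argument of the main theorem can
exist when |F| = κ⁺: if each hₙ uniformizes the coloring
Hⁿ_f(α) = f↾min(⋂_{k<n} Eᵏ \ (α+1)) on the club Eⁿ ⊇ E, we get a contradiction. -/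
theorem stmt10 (κ : Cardinal) (hreg : κ.IsRegular) (hunc : ℵ₀ < κ)
    (hpow : κ ^< κ = κ)
    (F : Set (Ordinal → Ordinal))
    (hF : #F = Cardinal.lift.{1,0} (Order.succ κ))
    (hFrange : ∀ f ∈ F, ∀ β < κ.ord, f β < κ.ord)
    (hFsep : ∀ f ∈ F, ∀ g ∈ F, f ≠ g → ∃ β < κ.ord, f β ≠ g β)
    (E : Set Ordinal) (hE : IsClubIn κ.ord E)
    (E' : ℕ → Set Ordinal) (hE' : ∀ n, IsClubIn κ.ord (E' n))
    (hEE' : ∀ n, E ⊆ E' n)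
    (h : ℕ → OSeq → Option OSeq)
    (hunif : ∀ f ∈ F, ∀ n : ℕ, ∃ a ∈ E, ∀ α ∈ E' n, a ≤ α →
      h n (restr f α) = some (restr f (sInf {β | α < β ∧ ∀ k < n, β ∈ E' k}))) :
    False := by
  classical
  have hθlim : Order.IsSuccLimit κ.ord := Cardinal.isSuccLimit_ord hreg.aleph0_le
  have hsupω : ∀ (g : ℕ → Ordinal), (∀ n, g n < κ.ord) → (⨆ n, g n) < κ.ord := by
    intro g hg
    refine Ordinal.iSup_lt_ord ?_ hg
    rw [hreg.cof_eq, Cardinal.mk_nat]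
    exact hunc
  -- the club C = ⋂ n, E' n
  set C : Set Ordinal := ⋂ n, E' n with hC
  have hCsub : C ⊆ Iio κ.ord := fun x hx => (hE' 0).1 (Set.mem_iInter.1 hx 0)
  have hCclosed : ∀ S ⊆ C, S.Nonempty → sSup S < κ.ord → sSup S ∈ C := by
    intro S hS hne hlt
    exact Set.mem_iInter.2 fun n =>
      (hE' n).2.1 S (fun x hx => Set.mem_iInter.1 (hS hx) n) hne hlt
  have hCunb : ∀ α < κ.ord, ∃ β ∈ C, α ≤ β := by
    intro α hα
    set nxt : ℕ → Ordinal → Ordinal := fun n x => sInf (E' n ∩ Ici x) with hnxtdef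
    have hnxt : ∀ n, ∀ x < κ.ord, nxt n x ∈ E' n ∩ Ici x := by
      intro n x hx
      apply csInf_mem
      obtain ⟨y, hy, hxy⟩ := (hE' n).2.2 x hx
      exact ⟨y, hy, hxy⟩
    set g : ℕ → Ordinal := fun m => Nat.rec α (fun _ x => (⨆ n, nxt n x) + 1) m with hg
    have hgs : ∀ m, g (m + 1) = (⨆ n, nxt n (g m)) + 1 := fun m => rfl
    have hglt : ∀ m, g m < κ.ord := by
      intro m
      induction m with
      | zero => exact hα
      | succ m ih =>
        rw [hgs]
        exact (fun (x : Ordinal) (hx : x < κ.ord) => show x + 1 < κ.ord by rw [Ordinal.add_one_eq_succ]; exact hθlim.succ_lt hx) _ (hsupω _ fun n => (hE' n).1 (hnxt n _ ih).1)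
    have hgmono : ∀ m, g m < g (m + 1) := by
      intro m
      rw [hgs]
      have h1 : g m ≤ nxt 0 (g m) := (hnxt 0 _ (hglt m)).2
      have h2 : nxt 0 (g m) ≤ ⨆ n, nxt n (g m) :=
        le_ciSup (Ordinal.bddAbove_range _) 0
      rw [Ordinal.add_one_eq_succ, Order.lt_succ_iff]
      exact h1.trans h2
    have hL : (⨆ m, g m) < κ.ord := hsupω g hglt
    refine ⟨⨆ m, g m, ?_, ?_⟩
    · refine Set.mem_iInter.2 fun n => ?_
      have hsub : Set.range (fun m => nxt n (g m)) ⊆ E' n := by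
        rintro x ⟨m, rfl⟩
        exact (hnxt n _ (hglt m)).1
      have hkey : sSup (Set.range (fun m => nxt n (g m))) = ⨆ m, g m := by
        apply le_antisymm
        · refine csSup_le ⟨_, ⟨0, rfl⟩⟩ ?_
          rintro x ⟨m, rfl⟩
          have : nxt n (g m) ≤ ⨆ n', nxt n' (g m) := le_ciSup (Ordinal.bddAbove_range _) n
          have h2 : (⨆ n', nxt n' (g m)) ≤ g (m + 1) := by
            rw [hgs, Ordinal.add_one_eq_succ]
            exact (Order.le_succ _)
          exact (this.trans h2).trans (le_ciSup (Ordinal.bddAbove_range _) (m + 1))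
        · refine ciSup_le fun m => ?_
          exact le_trans (hnxt n _ (hglt m)).2 (le_csSup (Ordinal.bddAbove_range _) ⟨m, rfl⟩)
      have := (hE' n).2.1 _ hsub ⟨_, ⟨0, rfl⟩⟩ (by rw [hkey]; exact hL)
      rwa [hkey] at this
    · exact le_ciSup (Ordinal.bddAbove_range _) 0
  -- jump functions
  set B : ℕ → Ordinal → Ordinal := fun n α => sInf {β | α < β ∧ ∀ k < n, β ∈ E' k} with hBdef
  have hBmem : ∀ n, ∀ α < κ.ord, α < B n α ∧ (∀ k < n, B n α ∈ E' k) ∧ B n α < κ.ord := by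
    intro n α hα
    obtain ⟨β, hβC, hβ⟩ := hCunb (α + 1) ((fun (x : Ordinal) (hx : x < κ.ord) => show x + 1 < κ.ord by rw [Ordinal.add_one_eq_succ]; exact hθlim.succ_lt hx) α hα)
    have hβmem : β ∈ {β | α < β ∧ ∀ k < n, β ∈ E' k} := by
      refine ⟨?_, fun k _ => Set.mem_iInter.1 hβC k⟩
      exact lt_of_lt_of_le (by rw [Ordinal.add_one_eq_succ]; exact Order.lt_succ α) hβ
    have hmem := csInf_mem (⟨β, hβmem⟩ : {β | α < β ∧ ∀ k < n, β ∈ E' k}.Nonempty)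
    exact ⟨hmem.1, hmem.2, lt_of_le_of_lt (csInf_le (OrderBot.bddBelow _) hβmem) (hCsub hβC)⟩
  have hBmono : ∀ α < κ.ord, ∀ m n : ℕ, m ≤ n → B m α ≤ B n α := by
    intro α hα m n hmn
    apply csInf_le_csInf (OrderBot.bddBelow _)
    · obtain ⟨β, hβC, hβ⟩ := hCunb (α + 1) ((fun (x : Ordinal) (hx : x < κ.ord) => show x + 1 < κ.ord by rw [Ordinal.add_one_eq_succ]; exact hθlim.succ_lt hx) α hα)
      refine ⟨β, ?_, fun k _ => Set.mem_iInter.1 hβC k⟩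
      exact lt_of_lt_of_le (by rw [Ordinal.add_one_eq_succ]; exact Order.lt_succ α) hβ
    · rintro x ⟨hx1, hx2⟩
      exact ⟨hx1, fun k hk => hx2 k (lt_of_lt_of_le hk hmn)⟩
  set s : Ordinal → Ordinal := fun α => ⨆ n, B n α with hsdef
  have hs : ∀ α < κ.ord, α < s α ∧ s α < κ.ord ∧ s α ∈ C := by
    intro α hα
    have hslt : s α < κ.ord := hsupω _ fun n => (hBmem n α hα).2.2
    have hαs : α < s α :=
      lt_of_lt_of_le (hBmem 0 α hα).1 (le_ciSup (Ordinal.bddAbove_range _) 0)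
    refine ⟨hαs, hslt, ?_⟩
    refine Set.mem_iInter.2 fun k => ?_
    have hsub : Set.range (fun m => B (k + 1 + m) α) ⊆ E' k := by
      rintro x ⟨m, rfl⟩
      exact (hBmem (k + 1 + m) α hα).2.1 k (by omega)
    have hkey : sSup (Set.range (fun m => B (k + 1 + m) α)) = s α := by
      apply le_antisymm
      · refine csSup_le ⟨_, ⟨0, rfl⟩⟩ ?_
        rintro x ⟨m, rfl⟩
        exact le_ciSup (Ordinal.bddAbove_range _) (k + 1 + m)
      · refine ciSup_le fun n => ?_
        exact le_trans (hBmono α hα n (k + 1 + n) (by omega))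
          (le_csSup (Ordinal.bddAbove_range _) ⟨n, rfl⟩)
    have := (hE' k).2.1 _ hsub ⟨_, ⟨0, rfl⟩⟩ (by rw [hkey]; exact hslt)
    rwa [hkey] at this
  -- choice of anchors
  choose a haE hspec using hunif
  set b : ∀ f, f ∈ F → Ordinal := fun f hf => ⨆ n, a f hf n with hbdef
  have hbθ : ∀ f hf, b f hf < κ.ord := fun f hf => hsupω _ fun n => hE.1 (haE f hf n)
  have hab : ∀ f hf n, a f hf n ≤ b f hf := fun f hf n =>
    le_ciSup (Ordinal.bddAbove_range _) n
  set A0 : ∀ f, f ∈ F → Ordinal := fun f hf => sInf (C ∩ Ici (b f hf)) with hA0def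
  have hA0 : ∀ f hf, A0 f hf ∈ C ∩ Ici (b f hf) := by
    intro f hf
    apply csInf_mem
    obtain ⟨β, hβC, hβ⟩ := hCunb (b f hf) (hbθ f hf)
    exact ⟨β, hβC, hβ⟩
  -- step lemma
  have hstep : ∀ f (hf : f ∈ F) g (hg : g ∈ F) σ, σ ∈ C → b f hf ≤ σ → b g hg ≤ σ →
      restr f σ = restr g σ → restr f (s σ) = restr g (s σ) := by
    intro f hf g hg σ hσC hbf hbg hres
    have hσθ : σ < κ.ord := hCsub hσC
    have hBeq : ∀ n, restr f (B n σ) = restr g (B n σ) := by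
      intro n
      have hf' := hspec f hf n σ (Set.mem_iInter.1 hσC n) ((hab f hf n).trans hbf)
      have hg' := hspec g hg n σ (Set.mem_iInter.1 hσC n) ((hab g hg n).trans hbg)
      rw [hres] at hf'
      have := hf'.symm.trans hg'
      exact Option.some.inj this
    refine restr_eq_of ?_
    intro γ hγ
    have : ∃ n, γ < B n σ := by
      by_contra hcon
      push_neg at hcon
      exact absurd (ciSup_le hcon : s σ ≤ γ) (not_le.2 hγ)
    obtain ⟨n, hn⟩ := this
    exact eq_of_restr_eq (hBeq n) γ hn
  -- main lemma: equal on a tail implies equal everywhere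
  have hmain : ∀ f (hf : f ∈ F) g (hg : g ∈ F), A0 f hf = A0 g hg →
      restr f (A0 f hf) = restr g (A0 g hg) → ∀ γ < κ.ord, f γ = g γ := by
    intro f hf g hg hAeq hres γ hγθ
    by_contra hne
    rw [← hAeq] at hres
    set A := A0 f hf with hA
    have hAC : A ∈ C := (hA0 f hf).1
    have hAbf : b f hf ≤ A := (hA0 f hf).2
    have hAbg : b g hg ≤ A := by rw [hAeq]; exact (hA0 g hg).2
    have hresA : restr f A = restr g A := hres
    by_cases hγA : γ < A
    · exact hne (eq_of_restr_eq hresA γ hγA)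
    push_neg at hγA
    set T : Set Ordinal := {α | α ∈ C ∧ A ≤ α ∧ α ≤ γ ∧ restr f α = restr g α} with hT
    have hAT : A ∈ T := ⟨hAC, le_refl A, hγA, hresA⟩
    have hTne : T.Nonempty := ⟨A, hAT⟩
    have hTbdd : BddAbove T := ⟨γ, fun x hx => hx.2.2.1⟩
    set σ := sSup T with hσ
    have hσγ : σ ≤ γ := csSup_le hTne fun x hx => hx.2.2.1
    have hσθ : σ < κ.ord := lt_of_le_of_lt hσγ hγθ
    have hσC : σ ∈ C := hCclosed T (fun x hx => hx.1) hTne hσθ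
    have hAσ : A ≤ σ := le_csSup hTbdd hAT
    have hresσ : restr f σ = restr g σ := by
      refine restr_eq_of fun γ' hγ' => ?_
      obtain ⟨x, hxT, hγ'x⟩ := (lt_csSup_iff hTbdd hTne).1 hγ'
      exact eq_of_restr_eq hxT.2.2.2 γ' hγ'x
    have hress : restr f (s σ) = restr g (s σ) :=
      hstep f hf g hg σ hσC (hAbf.trans hAσ) (hAbg.trans hAσ) hresσ
    obtain ⟨hσs, hsθ, hsC⟩ := hs σ hσθ
    by_cases hsγ : γ < s σ
    · exact hne (eq_of_restr_eq hress γ hsγ)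
    · push_neg at hsγ
      have hsT : s σ ∈ T := ⟨hsC, hAσ.trans hσs.le, hsγ, hress⟩
      exact absurd (le_csSup hTbdd hsT) (not_le.2 hσs)
  -- the injection
  have hseq : ∀ f (hf : f ∈ F), IsSeq κ (restr f (A0 f hf)) := by
    intro f hf
    have hAθ : A0 f hf < κ.ord := hCsub (hA0 f hf).1
    refine ⟨hAθ, ?_, ?_⟩
    · intro β hβ
      simp only [restr] at hβ ⊢
      rw [if_pos hβ]
      exact hFrange f hf β (lt_trans hβ hAθ)
    · intro β hβ
      simp only [restr] at hβ ⊢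
      rw [if_neg hβ]
  let Φ : F → {t : OSeq // IsSeq κ t} := fun f => ⟨restr f.1 (A0 f.1 f.2), hseq f.1 f.2⟩
  have hΦinj : Function.Injective Φ := by
    rintro ⟨f, hf⟩ ⟨g, hg⟩ hfg
    have hres : restr f (A0 f hf) = restr g (A0 g hg) := congrArg Subtype.val hfg
    have hAeq : A0 f hf = A0 g hg := congrArg Prod.fst hres
    have heq : ∀ γ < κ.ord, f γ = g γ := hmain f hf g hg hAeq hres
    refine Subtype.ext ?_
    by_contra hne
    obtain ⟨β, hβ, hβne⟩ := hFsep f hf g hg (fun hfg' => hne (by simpa using hfg'))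
    exact hβne (heq β hβ)
  have hle : #F ≤ Cardinal.lift.{1} κ :=
    (Cardinal.mk_le_of_injective hΦinj).trans (isSeq_card_le κ hreg.aleph0_le hpow)
  rw [hF, Cardinal.lift_le] at hle
  exact absurd hle (not_le.2 (Order.lt_succ κ))
end
end
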